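/- Let s ≥ 1 be an integer, c_1 < … < c_s be s distinct real numbers, and (A, b) the coefficients of the associated Runge–Kutta collocation method. Assume the method is I-stable and that the polynomial τ(π) has no root on the imaginary axis iℝ. Then the method is Î-stable, i.e. it is I-stable, IS-stable and ISI-stable. -/

import Mathlib

open Polynomial Matrix MeasureTheory

noncomputable section

/-- Lagrange basis function `ℓ_i(t) = ∏_{j≠i} (t - c_j)/(c_i - c_j)`. -/
def lagrangeFun (s : ℕ) (c : Fin s → ℝ) (i : Fin s) (t : ℝ) : ℝ :=
  ∏ j ∈ Finset.univ.erase i, (t - c j) / (c i - c j)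

/-- Coefficient matrix `A` of the collocation method: `a_{ij} = ∫_0^{c_i} ℓ_j`. -/
def collocA (s : ℕ) (c : Fin s → ℝ) : Matrix (Fin s) (Fin s) ℝ :=
  Matrix.of fun i j => ∫ t in (0:ℝ)..(c i), lagrangeFun s c j t

/-- Weight vector `b` of the collocation method: `b_i = ∫_0^1 ℓ_i`. -/
def collocB (s : ℕ) (c : Fin s → ℝ) : Fin s → ℝ :=
  fun i => ∫ t in (0:ℝ)..(1:ℝ), lagrangeFun s c i t

/-- `π = ∏ (X - c_i)`. -/
def piPoly (s : ℕ) (c : Fin s → ℝ) : Polynomial ℝ :=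
  ∏ i : Fin s, (Polynomial.X - Polynomial.C (c i))

/-- The linear map `τ` sending `Σ a_k X^k` to `Σ k! a_k X^k`. -/
def tauP (p : Polynomial ℝ) : Polynomial ℝ :=
  ∑ k ∈ p.support, Polynomial.C ((k.factorial : ℝ) * p.coeff k) * Polynomial.X ^ k

/-- The matrix `A` viewed as a complex matrix. -/
def collocAC (s : ℕ) (c : Fin s → ℝ) : Matrix (Fin s) (Fin s) ℂ :=
  (collocA s c).map (fun x => (x : ℂ))

/-- The weight vector `b` viewed as a complex vector. -/
def collocBC (s : ℕ) (c : Fin s → ℝ) : Fin s → ℂ :=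
  fun i => (collocB s c i : ℂ)

/-- The linear stability function `R(λ) = 1 + λ bᵀ (I - λ A)⁻¹ 𝟙`. -/
def stabR (s : ℕ) (c : Fin s → ℝ) (lam : ℂ) : ℂ :=
  1 + lam * (collocBC s c ⬝ᵥ ((1 - lam • collocAC s c)⁻¹ *ᵥ (fun _ => 1)))

/-- A-stability: `|R(λ)| ≤ 1` on the closed left half-plane (where defined). -/
def AStable (s : ℕ) (c : Fin s → ℝ) : Prop :=
  ∀ lam : ℂ, lam.re ≤ 0 → IsUnit (1 - lam • collocAC s c).det →
    ‖stabR s c lam‖ ≤ 1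

/-- I-stability: `|R(λ)| ≤ 1` on the imaginary axis (where defined). -/
def IStable (s : ℕ) (c : Fin s → ℝ) : Prop :=
  ∀ lam : ℂ, lam.re = 0 → IsUnit (1 - lam • collocAC s c).det →
    ‖stabR s c lam‖ ≤ 1

/-- AS-stability: `I - λA` invertible on `ℂ⁻` and `λ bᵀ (I - λA)⁻¹` uniformly bounded there. -/
def ASStable (s : ℕ) (c : Fin s → ℝ) : Prop :=
  (∀ lam : ℂ, lam.re ≤ 0 → IsUnit (1 - lam • collocAC s c).det) ∧
  ∃ M : ℝ, ∀ lam : ℂ, lam.re ≤ 0 → ∀ j,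
    ‖lam * (collocBC s c ᵥ* (1 - lam • collocAC s c)⁻¹) j‖ ≤ M

/-- ASI-stability: `I - λA` invertible on `ℂ⁻` and `(I - λA)⁻¹` uniformly bounded there. -/
def ASIStable (s : ℕ) (c : Fin s → ℝ) : Prop :=
  (∀ lam : ℂ, lam.re ≤ 0 → IsUnit (1 - lam • collocAC s c).det) ∧
  ∃ M : ℝ, ∀ lam : ℂ, lam.re ≤ 0 → ∀ i j,
    ‖(1 - lam • collocAC s c)⁻¹ i j‖ ≤ M

/-- IS-stability: `I - λA` invertible on `iℝ` and `λ bᵀ (I - λA)⁻¹` uniformly bounded there. -/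
def ISStable (s : ℕ) (c : Fin s → ℝ) : Prop :=
  (∀ lam : ℂ, lam.re = 0 → IsUnit (1 - lam • collocAC s c).det) ∧
  ∃ M : ℝ, ∀ lam : ℂ, lam.re = 0 → ∀ j,
    ‖lam * (collocBC s c ᵥ* (1 - lam • collocAC s c)⁻¹) j‖ ≤ M

/-- ISI-stability: `I - λA` invertible on `iℝ` and `(I - λA)⁻¹` uniformly bounded there. -/
def ISIStable (s : ℕ) (c : Fin s → ℝ) : Prop :=
  (∀ lam : ℂ, lam.re = 0 → IsUnit (1 - lam • collocAC s c).det) ∧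
  ∃ M : ℝ, ∀ lam : ℂ, lam.re = 0 → ∀ i j,
    ‖(1 - lam • collocAC s c)⁻¹ i j‖ ≤ M

end

noncomputable section AuxProofs

namespace Aux
variable (s : ℕ) (c : Fin s → ℝ)

def NN : Matrix (Fin s) (Fin s) ℝ :=
  Matrix.of fun m k => if (k:ℕ)+1 = s then -(piPoly s c).coeff (m:ℕ) / s
    else if (m:ℕ) = (k:ℕ)+1 then (((k:ℕ)+1 : ℝ))⁻¹ else 0

lemma lagrangeFun_eval (i : Fin s) (t : ℝ) :
    lagrangeFun s c i t = (Lagrange.basis Finset.univ c i).eval t := by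
  rw [Lagrange.basis, Polynomial.eval_prod, lagrangeFun]
  refine Finset.prod_congr rfl fun j _ => ?_
  rw [Lagrange.basisDivisor]
  simp [div_eq_inv_mul, mul_comm]

lemma continuous_lagrangeFun (i : Fin s) : Continuous (lagrangeFun s c i) := by
  have : lagrangeFun s c i = fun t => (Lagrange.basis Finset.univ c i).eval t := by
    funext t; exact lagrangeFun_eval s c i t
  rw [this]; exact Polynomial.continuous _

lemma interp_pow (hc : Function.Injective c) (k : ℕ) (hk : k < s) (t : ℝ) :
    ∑ j, (c j)^k * lagrangeFun s c j t = t^k := by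
  have hdeg : (Polynomial.X ^ k : ℝ[X]).degree < (Finset.univ : Finset (Fin s)).card := by
    rw [Polynomial.degree_X_pow, Finset.card_univ, Fintype.card_fin]
    exact_mod_cast hk
  have h := Lagrange.eq_interpolate (f := (Polynomial.X ^ k : ℝ[X]))
    (hc.injOn) hdeg
  have h2 := congrArg (Polynomial.eval t) h
  rw [Lagrange.interpolate_apply, Polynomial.eval_finset_sum] at h2
  simp only [Polynomial.eval_pow, Polynomial.eval_X, Polynomial.eval_mul,
    Polynomial.eval_C] at h2
  rw [h2]
  refine Finset.sum_congr rfl fun j _ => ?_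
  rw [lagrangeFun_eval]

lemma colloc_sum (hc : Function.Injective c) (i : Fin s) (k : ℕ) (hk : k < s) :
    ∑ j, collocA s c i j * (c j)^k = (c i)^(k+1) / (k+1) := by
  have h1 : ∀ j : Fin s, collocA s c i j * (c j)^k
      = ∫ t in (0:ℝ)..(c i), (c j)^k * lagrangeFun s c j t := by
    intro j
    rw [collocA, Matrix.of_apply, mul_comm, intervalIntegral.integral_const_mul]
  simp_rw [h1]
  rw [← intervalIntegral.integral_finset_sum]
  · rw [intervalIntegral.integral_congr (g := fun t => t^k)]
    · rw [integral_pow]; norm_num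
    · intro t _; exact interp_pow s c hc k hk t
  · intro j _
    exact Continuous.intervalIntegrable
      (continuous_const.mul (continuous_lagrangeFun s c j)) _ _

end Aux

namespace Aux2
open Aux
variable (s : ℕ) (c : Fin s → ℝ)

lemma piPoly_monic : (piPoly s c).Monic :=
  Polynomial.monic_prod_of_monic _ _ fun i _ => Polynomial.monic_X_sub_C (c i)

lemma piPoly_natDegree : (piPoly s c).natDegree = s := by
  rw [piPoly, Polynomial.natDegree_prod]
  · simp
  · intro i _; exact Polynomial.X_sub_C_ne_zero (c i)

lemma piPoly_coeff_top : (piPoly s c).coeff s = 1 := by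
  have := (piPoly_monic s c).coeff_natDegree
  rwa [piPoly_natDegree] at this

lemma piPoly_eval (i : Fin s) : (piPoly s c).eval (c i) = 0 := by
  rw [piPoly, Polynomial.eval_prod]
  exact Finset.prod_eq_zero (Finset.mem_univ i) (by simp)

lemma piPoly_sum_range (x : ℝ) :
    ∑ m ∈ Finset.range s, (piPoly s c).coeff m * x^m = (piPoly s c).eval x - x^s := by
  have h := Polynomial.eval_eq_sum_range (p := piPoly s c) x
  rw [piPoly_natDegree, Finset.sum_range_succ, piPoly_coeff_top, one_mul] at h
  linarith [h]

lemma AV_eq_VN (hc : Function.Injective c) (hs : 1 ≤ s) :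
    collocA s c * Matrix.vandermonde c = Matrix.vandermonde c * NN s c := by
  ext i k
  rw [Matrix.mul_apply, Matrix.mul_apply]
  have hsne : (s:ℝ) ≠ 0 := Nat.cast_ne_zero.mpr (by omega)
  have hL : ∑ j, collocA s c i j * Matrix.vandermonde c j k
      = (c i)^((k:ℕ)+1) / ((k:ℕ)+1) := by
    simp only [Matrix.vandermonde_apply]
    exact colloc_sum s c hc i k k.isLt
  rw [hL]
  by_cases hk : (k:ℕ)+1 = s
  · have hR : ∑ m, Matrix.vandermonde c i m * NN s c m k
        = ∑ m ∈ Finset.range s, (c i)^m * (-(piPoly s c).coeff m / s) := by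
      rw [← Fin.sum_univ_eq_sum_range (fun m => (c i)^m * (-(piPoly s c).coeff m / s))]
      refine Finset.sum_congr rfl fun m _ => ?_
      rw [Matrix.vandermonde_apply, NN, Matrix.of_apply, if_pos hk]
    rw [hR]
    have h2 : ∑ m ∈ Finset.range s, (c i)^m * (-(piPoly s c).coeff m / s)
        = -(∑ m ∈ Finset.range s, (piPoly s c).coeff m * (c i)^m) / s := by
      rw [← Finset.sum_neg_distrib, Finset.sum_div]
      refine Finset.sum_congr rfl fun m _ => ?_; ring
    rw [h2, piPoly_sum_range, piPoly_eval]
    have h1 : (((k:ℕ):ℝ)+1) = (s:ℝ) := by exact_mod_cast hk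
    rw [hk, h1]
    ring
  · have hk' : (k:ℕ)+1 < s := by omega
    rw [Finset.sum_eq_single (⟨(k:ℕ)+1, hk'⟩ : Fin s)]
    · rw [Matrix.vandermonde_apply, NN, Matrix.of_apply, if_neg hk, if_pos rfl]
      simp [div_eq_mul_inv]
    · intro m _ hm
      rw [NN, Matrix.of_apply, if_neg hk, if_neg, mul_zero]
      intro h
      exact hm (Fin.ext h)
    · intro h; exact absurd (Finset.mem_univ _) h

end Aux2

namespace Aux3
open Aux Aux2
variable (s : ℕ) (c : Fin s → ℝ)

def VC : Matrix (Fin s) (Fin s) ℂ := (Matrix.vandermonde c).map (fun x => (x:ℂ))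
def NC : Matrix (Fin s) (Fin s) ℂ := (NN s c).map (fun x => (x:ℂ))

lemma hAVC (hc : Function.Injective c) (hs : 1 ≤ s) :
    collocAC s c * VC s c = VC s c * NC s c := by
  have h := congrArg (fun M => M.map (Complex.ofRealHom : ℝ →+* ℂ)) (AV_eq_VN s c hc hs)
  simp only [_root_.Matrix.map_mul] at h
  exact h

lemma detVC (hc : StrictMono c) : IsUnit (VC s c).det := by
  rw [isUnit_iff_ne_zero]
  have h : (VC s c).det = (((Matrix.vandermonde c).det : ℝ) : ℂ) :=
    (RingHom.map_det Complex.ofRealHom (Matrix.vandermonde c)).symm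
  rw [h]
  simp only [ne_eq, Complex.ofReal_eq_zero]
  rw [Matrix.det_vandermonde]
  refine Finset.prod_ne_zero_iff.mpr fun i _ => Finset.prod_ne_zero_iff.mpr fun j hj => ?_
  rw [Finset.mem_Ioi] at hj
  exact sub_ne_zero_of_ne (ne_of_gt (hc hj))

lemma tau_eval (μ : ℂ) : Polynomial.aeval μ (tauP (piPoly s c))
    = ∑ m ∈ Finset.range (s+1), (m.factorial:ℂ) * ((piPoly s c).coeff m :ℂ) * μ^m := by
  rw [tauP, map_sum]
  have h1 : ∀ k:ℕ, (Polynomial.aeval μ)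
      (Polynomial.C ((k.factorial:ℝ) * (piPoly s c).coeff k) * Polynomial.X ^ k)
      = (k.factorial:ℂ) * ((piPoly s c).coeff k :ℂ) * μ^k := by
    intro k
    simp only [_root_.map_mul, Polynomial.aeval_C, map_pow, Polynomial.aeval_X,
      Complex.coe_algebraMap]
    push_cast
    ring
  simp_rw [h1]
  refine Finset.sum_subset ?_ ?_
  · have h := Polynomial.supp_subset_range_natDegree_succ (p := piPoly s c)
    rwa [piPoly_natDegree] at h
  · intro k _ hk
    rw [Polynomial.notMem_support_iff.mp hk]
    simp

lemma rowsum (hs : 1 ≤ s) (m : ℕ) (hsm : m < s) (w : Fin s → ℂ) :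
    ∑ k, ((NN s c ⟨m, hsm⟩ k : ℝ):ℂ) * w k
    = (if h : 1 ≤ m then ((m:ℂ))⁻¹ * w ⟨m-1, by omega⟩ else 0)
      + (-(((piPoly s c).coeff m : ℝ):ℂ)/s) * w ⟨s-1, by omega⟩ := by
  have hlmem : (⟨s-1, by omega⟩ : Fin s) ∈ (Finset.univ : Finset (Fin s)) := Finset.mem_univ _
  rw [← Finset.add_sum_erase _ _ hlmem]
  have hlv : ((NN s c ⟨m, hsm⟩ ⟨s-1, by omega⟩ : ℝ):ℂ)
      = -(((piPoly s c).coeff m : ℝ):ℂ)/s := by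
    rw [NN, Matrix.of_apply, if_pos (show s-1+1 = s by omega)]
    push_cast
    ring
  rw [hlv, add_comm]
  congr 1
  by_cases hm : 1 ≤ m
  · rw [dif_pos hm]
    have hm2 : m - 1 < s := by omega
    have hs2 : 2 ≤ s := by omega
    rw [Finset.sum_eq_single_of_mem (⟨m-1, hm2⟩ : Fin s)]
    · have hval : ((NN s c ⟨m, hsm⟩ ⟨m-1, hm2⟩ : ℝ):ℂ) = ((m:ℂ))⁻¹ := by
        rw [NN, Matrix.of_apply, if_neg (show ¬(m-1+1 = s) by omega),
          if_pos (show m = m-1+1 by omega)]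
        have h4 : (((m-1 : ℕ)) : ℝ) + 1 = ((m:ℕ):ℝ) := by
          have h5 := Nat.sub_add_cancel hm
          exact_mod_cast congrArg (Nat.cast (R := ℝ)) h5
        rw [h4]
        push_cast
        rfl
      rw [hval]
    · refine Finset.mem_erase.mpr ⟨?_, Finset.mem_univ _⟩
      intro h
      have h4 : m-1 = s-1 := congrArg Fin.val h
      omega
    · intro k hk hkk
      have hkne : k ≠ ⟨s-1, by omega⟩ := (Finset.mem_erase.mp hk).1
      have hknat : (k:ℕ) ≠ s-1 := fun h => hkne (Fin.ext h)
      have hmk : m ≠ (k:ℕ)+1 := by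
        intro h
        apply hkk
        apply Fin.ext
        show (k:ℕ) = m-1
        omega
      have hz : ((NN s c ⟨m, hsm⟩ k : ℝ):ℂ) = 0 := by
        rw [NN, Matrix.of_apply, if_neg (show ¬((k:ℕ)+1 = s) by omega), if_neg hmk]
        simp
      rw [hz, zero_mul]
  · rw [dif_neg hm]
    refine Finset.sum_eq_zero fun k hk => ?_
    have hkne : k ≠ ⟨s-1, by omega⟩ := (Finset.mem_erase.mp hk).1
    have hknat : (k:ℕ) ≠ s-1 := fun h => hkne (Fin.ext h)
    have hz : ((NN s c ⟨m, hsm⟩ k : ℝ):ℂ) = 0 := by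
      rw [NN, Matrix.of_apply, if_neg (show ¬((k:ℕ)+1 = s) by omega),
        if_neg (show ¬(m = (k:ℕ)+1) by omega)]
      simp
    rw [hz, zero_mul]

end Aux3

namespace Aux4
open Aux Aux2 Aux3

lemma keydet (s : ℕ) (c : Fin s → ℝ) (hc : StrictMono c) (hs : 1 ≤ s) (μ : ℂ)
    (hτ : Polynomial.aeval μ (tauP (piPoly s c)) ≠ 0) :
    (collocAC s c - μ • 1).det ≠ 0 := by
  intro hdet
  obtain ⟨v, hv0, hv⟩ := (Matrix.exists_mulVec_eq_zero_iff).mpr hdet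
  have hAv : (collocAC s c) *ᵥ v = μ • v := by
    have h1 : (collocAC s c - μ • 1) *ᵥ v = (collocAC s c) *ᵥ v - μ • v := by
      rw [Matrix.sub_mulVec, Matrix.smul_mulVec, Matrix.one_mulVec]
    rw [h1] at hv
    exact sub_eq_zero.mp hv
  have hdV := detVC s c hc
  set w : Fin s → ℂ := (VC s c)⁻¹ *ᵥ v with hwdef
  have hVw : (VC s c) *ᵥ w = v := by
    rw [hwdef, Matrix.mulVec_mulVec, Matrix.mul_nonsing_inv _ hdV, Matrix.one_mulVec]
  have hw0 : w ≠ 0 := by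
    intro h
    apply hv0
    rw [← hVw, h, Matrix.mulVec_zero]
  have hNw : (NC s c) *ᵥ w = μ • w := by
    calc (NC s c) *ᵥ w = ((VC s c)⁻¹ * (VC s c * NC s c)) *ᵥ w := by
          rw [← Matrix.mul_assoc, Matrix.nonsing_inv_mul _ hdV, Matrix.one_mul]
      _ = ((VC s c)⁻¹ * (collocAC s c * VC s c)) *ᵥ w := by rw [hAVC s c hc.injective hs]
      _ = (VC s c)⁻¹ *ᵥ (collocAC s c *ᵥ ((VC s c) *ᵥ w)) := by
          conv_rhs => rw [Matrix.mulVec_mulVec, Matrix.mulVec_mulVec]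
          rw [← Matrix.mul_assoc]
      _ = (VC s c)⁻¹ *ᵥ (μ • v) := by rw [hVw, hAv]
      _ = μ • ((VC s c)⁻¹ *ᵥ v) := Matrix.mulVec_smul _ _ _
      _ = μ • w := by rw [← hwdef]
  have hsne : ((s:ℕ):ℂ) ≠ 0 := Nat.cast_ne_zero.mpr (by omega)
  set W : ℕ → ℂ := fun n => if h : n < s then w ⟨n,h⟩ else 0 with hWdef
  -- the recurrence
  have hW : ∀ m : ℕ, 1 ≤ m → m ≤ s →
      W (m-1) = (m:ℂ) * μ * W m
        + ((m:ℂ) * (((piPoly s c).coeff m : ℝ):ℂ)/s) * W (s-1) := by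
    intro m hm1 hms
    rcases eq_or_lt_of_le hms with he | hlt
    · subst he
      have h0 : W m = 0 := dif_neg (by omega)
      have hc1 : (piPoly m c).coeff m = 1 := piPoly_coeff_top m c
      rw [h0, hc1]
      have hW1 : W (m-1) = W (m-1) := rfl
      push_cast
      field_simp
      ring
    · have heq := congrFun hNw ⟨m, hlt⟩
      have hsum : (NC s c *ᵥ w) ⟨m, hlt⟩ = ∑ k, ((NN s c ⟨m,hlt⟩ k : ℝ):ℂ) * w k := by
        simp [Matrix.mulVec, dotProduct, NC, Matrix.map_apply]
      rw [hsum, rowsum s c hs m hlt w, dif_pos hm1] at heq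
      simp only [Pi.smul_apply, smul_eq_mul] at heq
      have hWm : W m = w ⟨m, hlt⟩ := dif_pos hlt
      have hWm1 : W (m-1) = w ⟨m-1, by omega⟩ := dif_pos (by omega)
      have hWs1 : W (s-1) = w ⟨s-1, by omega⟩ := dif_pos (by omega)
      rw [← hWm, ← hWm1, ← hWs1] at heq
      have hmne : ((m:ℕ):ℂ) ≠ 0 := Nat.cast_ne_zero.mpr (by omega)
      field_simp at heq ⊢
      linear_combination heq
  -- telescoping
  set u := W (s-1) with hu
  set G : ℕ → ℂ := fun i => μ^i * (i.factorial : ℂ) * W i with hG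
  have htel : ∀ i ∈ Finset.range s, G i - G (i+1)
      = μ^i * (((i+1).factorial : ℕ) : ℂ) * (((piPoly s c).coeff (i+1) : ℝ):ℂ) * u / s := by
    intro i hi
    rw [Finset.mem_range] at hi
    have hE := hW (i+1) (by omega) (by omega)
    simp only [Nat.add_sub_cancel] at hE
    simp only [hG]
    rw [hE]
    push_cast [Nat.factorial_succ]
    ring
  have hGs : G s = 0 := by
    have h0 : W s = 0 := dif_neg (by omega)
    simp [hG, h0]
  have hW0 : W 0 = ∑ i ∈ Finset.range s,
      μ^i * (((i+1).factorial : ℕ) : ℂ) * (((piPoly s c).coeff (i+1) : ℝ):ℂ) * u / s := by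
    have h1 := Finset.sum_range_sub' (f := G) s
    rw [Finset.sum_congr rfl htel] at h1
    rw [h1, hGs, sub_zero]
    simp [hG]
  -- E0
  have hE0 : (s:ℂ) * (μ * W 0) + (((piPoly s c).coeff 0 : ℝ):ℂ) * u = 0 := by
    have hlt0 : 0 < s := by omega
    have heq := congrFun hNw ⟨0, hlt0⟩
    have hsum : (NC s c *ᵥ w) ⟨0, hlt0⟩ = ∑ k, ((NN s c ⟨0,hlt0⟩ k : ℝ):ℂ) * w k := by
      simp [Matrix.mulVec, dotProduct, NC, Matrix.map_apply]
    rw [hsum, rowsum s c hs 0 hlt0 w, dif_neg (by omega)] at heq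
    simp only [Pi.smul_apply, smul_eq_mul] at heq
    have hW0' : W 0 = w ⟨0, hlt0⟩ := dif_pos hlt0
    have hWs1 : W (s-1) = w ⟨s-1, by omega⟩ := dif_pos (by omega)
    rw [← hW0', ← hWs1] at heq
    rw [← hu] at heq
    field_simp at heq
    linear_combination -heq
  have h6 : (s:ℂ) * (μ * W 0) = ∑ i ∈ Finset.range s,
      (((i+1).factorial : ℕ) : ℂ) * (((piPoly s c).coeff (i+1) : ℝ):ℂ) * μ^(i+1) * u := by
    rw [hW0, Finset.mul_sum, Finset.mul_sum]
    refine Finset.sum_congr rfl fun i _ => ?_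
    field_simp
    ring
  have hT : (Polynomial.aeval μ (tauP (piPoly s c))) * u = 0 := by
    rw [tau_eval, Finset.sum_range_succ', add_mul, Finset.sum_mul, ← h6]
    norm_num [Nat.factorial]
    linear_combination hE0
  rcases mul_eq_zero.mp hT with h | h
  · exact hτ h
  · -- u = 0
    have hu0 : u = 0 := h
    have hzero : ∀ d : ℕ, W (s-1-d) = 0 := by
      intro d
      induction d with
      | zero => simpa using hu0
      | succ d ih =>
        by_cases hd : s-1 ≤ d
        · have he : s-1-(d+1) = s-1-d := by omega
          rw [he]
          exact ih
        · have hm1 : 1 ≤ s-1-d := by omega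
          have hm2 : s-1-d ≤ s := by omega
          have hE := hW (s-1-d) hm1 hm2
          have he : s-1-(d+1) = (s-1-d) - 1 := by omega
          rw [he, hE, ih, hu0]
          ring
    apply hw0
    funext m
    have h1 : W (m:ℕ) = w m := by
      simp only [hWdef]
      rw [dif_pos m.isLt]
    have h2 : s-1-(s-1-(m:ℕ)) = (m:ℕ) := by omega
    have h3 := hzero (s-1-(m:ℕ))
    rw [h2] at h3
    rw [h1] at h3
    exact h3

end Aux4

namespace Aux5
open Aux4 Filter Topology

variable (s : ℕ) (c : Fin s → ℝ)

lemma hre (t : ℝ) : ((t:ℂ)*Complex.I).re = 0 := by simp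

lemma smul_identity (A : Matrix (Fin s) (Fin s) ℂ) (lam : ℂ) (hlam : lam ≠ 0) :
    1 - lam • A = (-lam) • (A - lam⁻¹ • 1) := by
  ext i j
  simp only [Matrix.sub_apply, Matrix.smul_apply, Matrix.one_apply, smul_eq_mul]
  by_cases h : i = j <;> simp [h] <;> field_simp <;> ring

lemma det_one_sub_ne (hNZ : ∀ μ : ℂ, μ.re = 0 → (collocAC s c - μ • 1).det ≠ 0)
    (lam : ℂ) (h : lam.re = 0) : (1 - lam • collocAC s c).det ≠ 0 := by
  by_cases hlam : lam = 0
  · subst hlam; simp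
  · rw [smul_identity s (collocAC s c) lam hlam, Matrix.det_smul]
    refine mul_ne_zero (pow_ne_zero _ (neg_ne_zero.mpr hlam)) ?_
    exact hNZ lam⁻¹ (by rw [Complex.inv_re, h, zero_div])

lemma inv_formula (hNZ : ∀ μ : ℂ, μ.re = 0 → (collocAC s c - μ • 1).det ≠ 0)
    (lam : ℂ) (h : lam.re = 0) (hlam : lam ≠ 0) :
    (1 - lam • collocAC s c)⁻¹ = (-lam⁻¹) • (collocAC s c - lam⁻¹ • 1)⁻¹ := by
  apply Matrix.inv_eq_right_inv
  have hUnit : IsUnit (collocAC s c - lam⁻¹ • 1).det :=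
    isUnit_iff_ne_zero.mpr (hNZ lam⁻¹ (by rw [Complex.inv_re, h, zero_div]))
  rw [smul_identity s (collocAC s c) lam hlam, Matrix.smul_mul, Matrix.mul_smul,
    Matrix.mul_nonsing_inv _ hUnit, smul_smul, neg_mul_neg, mul_inv_cancel₀ hlam, one_smul]

lemma bdd_of_tendsto (f : ℝ → ℝ) (hf : Continuous f) {l1 l2 : ℝ}
    (h1 : Tendsto f atTop (nhds l1)) (h2 : Tendsto f atBot (nhds l2)) :
    ∃ M : ℝ, ∀ t, f t ≤ M := by
  have e1 : ∀ᶠ t in atTop, f t < l1 + 1 := h1.eventually_lt_const (by linarith)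
  have e2 : ∀ᶠ t in atBot, f t < l2 + 1 := h2.eventually_lt_const (by linarith)
  obtain ⟨T1, hT1⟩ := eventually_atTop.mp e1
  obtain ⟨T0, hT0⟩ := eventually_atBot.mp e2
  obtain ⟨C, hC⟩ := (isCompact_Icc (a := T0) (b := T1)).exists_bound_of_continuousOn
    hf.continuousOn
  refine ⟨max (max (l1+1) (l2+1)) C, fun t => ?_⟩
  rcases le_total t T0 with h | h
  · exact le_trans (hT0 t h).le (le_max_of_le_left (le_max_right _ _))
  · rcases le_total T1 t with h' | h'
    · exact le_trans (hT1 t h').le (le_max_of_le_left (le_max_left _ _))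
    · have h3 := hC t ⟨h, h'⟩
      have h4 : f t ≤ C := (le_abs_self _).trans (by simpa [Real.norm_eq_abs] using h3)
      exact h4.trans (le_max_right _ _)

-- continuity of t ↦ (1 - (tI)•A)⁻¹ entries
lemma cont_M : Continuous fun t : ℝ => (1 - ((t:ℂ)*Complex.I) • collocAC s c) := by
  refine continuous_matrix fun i j => ?_
  simp only [Matrix.sub_apply, Matrix.smul_apply, smul_eq_mul]
  exact continuous_const.sub (((Complex.continuous_ofReal.mul continuous_const)).mul
    continuous_const)

lemma cont_inv_entry (hNZ : ∀ μ : ℂ, μ.re = 0 → (collocAC s c - μ • 1).det ≠ 0) (i j : Fin s) :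
    Continuous fun t : ℝ => (1 - ((t:ℂ)*Complex.I) • collocAC s c)⁻¹ i j := by
  have hM := cont_M s c
  have hdet : Continuous fun t : ℝ => (1 - ((t:ℂ)*Complex.I) • collocAC s c).det :=
    hM.matrix_det
  have hadj : Continuous fun t : ℝ =>
      (1 - ((t:ℂ)*Complex.I) • collocAC s c).adjugate i j :=
    (continuous_apply j).comp ((continuous_apply i).comp hM.matrix_adjugate)
  have heq : (fun t : ℝ => (1 - ((t:ℂ)*Complex.I) • collocAC s c)⁻¹ i j)
      = fun t : ℝ => ((1 - ((t:ℂ)*Complex.I) • collocAC s c).det)⁻¹ *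
          (1 - ((t:ℂ)*Complex.I) • collocAC s c).adjugate i j := by
    funext t
    rw [Matrix.inv_def, Ring.inverse_eq_inv, Matrix.smul_apply, smul_eq_mul]
  rw [heq]
  exact (hdet.inv₀ fun t => det_one_sub_ne s c hNZ _ (hre t)).mul hadj

lemma contAt_g_entry (hNZ : ∀ μ : ℂ, μ.re = 0 → (collocAC s c - μ • 1).det ≠ 0) (i j : Fin s) :
    ContinuousAt (fun μ : ℂ => (collocAC s c - μ • 1)⁻¹ i j) 0 := by
  have hM : Continuous fun μ : ℂ => collocAC s c - μ • 1 := by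
    refine continuous_matrix fun i j => ?_
    simp only [Matrix.sub_apply, Matrix.smul_apply, smul_eq_mul]
    exact continuous_const.sub (continuous_id.mul continuous_const)
  have hdet0 : ((collocAC s c - (0:ℂ) • 1).det) ≠ 0 := hNZ 0 (by simp)
  have hinv : ContinuousAt (fun μ : ℂ => ((collocAC s c - μ • 1).det)⁻¹) 0 :=
    (hM.matrix_det.continuousAt).inv₀ hdet0
  have hadj : Continuous fun μ : ℂ => (collocAC s c - μ • 1).adjugate i j :=
    (continuous_apply j).comp ((continuous_apply i).comp hM.matrix_adjugate)
  have heq : (fun μ : ℂ => (collocAC s c - μ • 1)⁻¹ i j)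
      = fun μ => ((collocAC s c - μ • 1).det)⁻¹ * (collocAC s c - μ • 1).adjugate i j := by
    funext μ
    rw [Matrix.inv_def, Ring.inverse_eq_inv, Matrix.smul_apply, smul_eq_mul]
  rw [heq]
  exact hinv.mul hadj.continuousAt

lemma tendsto_mu {l : Filter ℝ} (hl : Tendsto (fun t : ℝ => (t:ℝ)⁻¹) l (nhds 0)) :
    Tendsto (fun t : ℝ => ((t:ℂ)*Complex.I)⁻¹) l (nhds 0) := by
  have h0 : Tendsto (fun t : ℝ => ((t:ℂ))⁻¹) l (nhds 0) := by
    have h := (Complex.continuous_ofReal.tendsto (0:ℝ)).comp hl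
    rw [Complex.ofReal_zero] at h
    exact h.congr fun t => by simp [Function.comp]
  have heq : (fun t : ℝ => ((t:ℂ)*Complex.I)⁻¹) = fun t : ℝ => ((t:ℂ))⁻¹ * Complex.I⁻¹ := by
    funext t; rw [mul_inv]
  rw [heq]
  simpa using h0.mul_const (Complex.I⁻¹)

end Aux5

namespace Aux6
open Aux5 Filter Topology

variable (s : ℕ) (c : Fin s → ℝ)

lemma inv_atBot : Tendsto (fun t : ℝ => t⁻¹) atBot (nhds 0) := by
  have h1 : Tendsto (fun t : ℝ => -t) atBot atTop := tendsto_neg_atBot_atTop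
  have h2 : Tendsto (fun t : ℝ => (-t)⁻¹) atBot (nhds 0) :=
    (tendsto_inv_atTop_zero (𝕜 := ℝ)).comp h1
  have h3 := h2.neg
  rw [neg_zero] at h3
  exact h3.congr fun t => by rw [inv_neg, neg_neg]

lemma vecMul_apply' (M : Matrix (Fin s) (Fin s) ℂ) (v : Fin s → ℂ) (j : Fin s) :
    (v ᵥ* M) j = ∑ i, v i * M i j := by
  simp [Matrix.vecMul, dotProduct]

lemma entry_eventual (hNZ : ∀ μ : ℂ, μ.re = 0 → (collocAC s c - μ • 1).det ≠ 0)
    (i j : Fin s) (t : ℝ) (ht : t ≠ 0) :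
    (1 - ((t:ℂ)*Complex.I) • collocAC s c)⁻¹ i j
      = (-(((t:ℂ)*Complex.I))⁻¹) * ((collocAC s c - ((t:ℂ)*Complex.I)⁻¹ • 1)⁻¹ i j) := by
  have htne : ((t:ℂ)*Complex.I) ≠ 0 :=
    mul_ne_zero (Complex.ofReal_ne_zero.mpr ht) Complex.I_ne_zero
  rw [inv_formula s c hNZ _ (hre t) htne]
  simp [Matrix.smul_apply, smul_eq_mul]

lemma entry_tendsto (hNZ : ∀ μ : ℂ, μ.re = 0 → (collocAC s c - μ • 1).det ≠ 0)
    (i j : Fin s) {l : Filter ℝ}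
    (hl : Tendsto (fun t : ℝ => (t:ℝ)⁻¹) l (nhds 0)) (hne : ∀ᶠ t in l, t ≠ 0) :
    Tendsto (fun t : ℝ => (1 - ((t:ℂ)*Complex.I) • collocAC s c)⁻¹ i j) l (nhds 0) := by
  have hμ := tendsto_mu hl
  have hg : Tendsto (fun t : ℝ => (collocAC s c - ((t:ℂ)*Complex.I)⁻¹ • 1)⁻¹ i j) l
      (nhds ((collocAC s c - (0:ℂ) • 1)⁻¹ i j)) := by
    have h := (contAt_g_entry s c hNZ i j).tendsto.comp hμ
    simpa [Function.comp_def] using h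
  have h2 : Tendsto (fun t : ℝ => (-(((t:ℂ)*Complex.I))⁻¹) *
      ((collocAC s c - ((t:ℂ)*Complex.I)⁻¹ • 1)⁻¹ i j)) l (nhds 0) := by
    have h3 := hμ.neg.mul hg
    simpa using h3
  refine Tendsto.congr' ?_ h2
  filter_upwards [hne] with t ht
  exact (entry_eventual s c hNZ i j t ht).symm

lemma ISI_bound (hNZ : ∀ μ : ℂ, μ.re = 0 → (collocAC s c - μ • 1).det ≠ 0) :
    ∃ M : ℝ, ∀ lam : ℂ, lam.re = 0 → ∀ i j,
    ‖(1 - lam • collocAC s c)⁻¹ i j‖ ≤ M := by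
  set Φ : ℝ → ℝ := fun t => ∑ p : Fin s × Fin s,
      ‖(1 - ((t:ℂ)*Complex.I) • collocAC s c)⁻¹ p.1 p.2‖ with hΦ
  have hcont : Continuous Φ := by
    refine continuous_finset_sum _ fun p _ => ?_
    exact continuous_norm.comp (cont_inv_entry s c hNZ p.1 p.2)
  have htop : Tendsto Φ atTop (nhds 0) := by
    have h : Tendsto Φ atTop (nhds (∑ _p : Fin s × Fin s, (0:ℝ))) := by
      refine tendsto_finset_sum _ fun p _ => ?_
      have h := entry_tendsto s c hNZ p.1 p.2 tendsto_inv_atTop_zero (eventually_ne_atTop 0)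
      have h2 := (continuous_norm.tendsto (0:ℂ)).comp h
      simpa [Function.comp_def] using h2
    simpa using h
  have hbot : Tendsto Φ atBot (nhds 0) := by
    have h : Tendsto Φ atBot (nhds (∑ _p : Fin s × Fin s, (0:ℝ))) := by
      refine tendsto_finset_sum _ fun p _ => ?_
      have h := entry_tendsto s c hNZ p.1 p.2 inv_atBot (eventually_ne_atBot 0)
      have h2 := (continuous_norm.tendsto (0:ℂ)).comp h
      simpa [Function.comp_def] using h2
    simpa using h
  obtain ⟨M, hM⟩ := bdd_of_tendsto Φ hcont htop hbot
  refine ⟨M, fun lam h i j => ?_⟩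
  have hlam : lam = ((lam.im : ℝ):ℂ) * Complex.I := by
    apply Complex.ext <;> simp [h]
  refine le_trans ?_ (hM lam.im)
  have hs := Finset.single_le_sum (f := fun p : Fin s × Fin s =>
    ‖(1 - (((lam.im:ℝ):ℂ)*Complex.I) • collocAC s c)⁻¹ p.1 p.2‖)
    (fun p _ => norm_nonneg _) (Finset.mem_univ (i,j))
  rw [hlam]
  simpa [hΦ] using hs

lemma q_eventual (hNZ : ∀ μ : ℂ, μ.re = 0 → (collocAC s c - μ • 1).det ≠ 0)
    (j : Fin s) (t : ℝ) (ht : t ≠ 0) :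
    ((t:ℂ)*Complex.I) * ((collocBC s c) ᵥ* (1 - ((t:ℂ)*Complex.I) • collocAC s c)⁻¹) j
      = -∑ i, collocBC s c i * ((collocAC s c - ((t:ℂ)*Complex.I)⁻¹ • 1)⁻¹ i j) := by
  have htne : ((t:ℂ)*Complex.I) ≠ 0 :=
    mul_ne_zero (Complex.ofReal_ne_zero.mpr ht) Complex.I_ne_zero
  rw [vecMul_apply', Finset.mul_sum, ← Finset.sum_neg_distrib]
  refine Finset.sum_congr rfl fun i _ => ?_
  rw [entry_eventual s c hNZ i j t ht]
  have htc : (t:ℂ) ≠ 0 := Complex.ofReal_ne_zero.mpr ht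
  field_simp

lemma cont_q (hNZ : ∀ μ : ℂ, μ.re = 0 → (collocAC s c - μ • 1).det ≠ 0) (j : Fin s) :
    Continuous fun t : ℝ =>
      ((t:ℂ)*Complex.I) * ((collocBC s c) ᵥ* (1 - ((t:ℂ)*Complex.I) • collocAC s c)⁻¹) j := by
  have h1 : Continuous fun t : ℝ => ((t:ℂ)*Complex.I) :=
    Complex.continuous_ofReal.mul continuous_const
  refine h1.mul ?_
  have heq : (fun t : ℝ => ((collocBC s c) ᵥ* (1 - ((t:ℂ)*Complex.I) • collocAC s c)⁻¹) j)
      = fun t : ℝ => ∑ i, collocBC s c i * (1 - ((t:ℂ)*Complex.I) • collocAC s c)⁻¹ i j := by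
    funext t; exact vecMul_apply' s _ _ _
  rw [heq]
  exact continuous_finset_sum _ fun i _ => continuous_const.mul (cont_inv_entry s c hNZ i j)

lemma q_tendsto (hNZ : ∀ μ : ℂ, μ.re = 0 → (collocAC s c - μ • 1).det ≠ 0)
    (j : Fin s) {l : Filter ℝ}
    (hl : Tendsto (fun t : ℝ => (t:ℝ)⁻¹) l (nhds 0)) (hne : ∀ᶠ t in l, t ≠ 0) :
    Tendsto (fun t : ℝ =>
      ((t:ℂ)*Complex.I) * ((collocBC s c) ᵥ* (1 - ((t:ℂ)*Complex.I) • collocAC s c)⁻¹) j) l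
      (nhds (-∑ i, collocBC s c i * ((collocAC s c - (0:ℂ) • 1)⁻¹ i j))) := by
  have hμ := tendsto_mu hl
  have h2 : Tendsto (fun t : ℝ => -∑ i, collocBC s c i *
      ((collocAC s c - ((t:ℂ)*Complex.I)⁻¹ • 1)⁻¹ i j)) l
      (nhds (-∑ i, collocBC s c i * ((collocAC s c - (0:ℂ) • 1)⁻¹ i j))) := by
    refine Tendsto.neg (tendsto_finset_sum _ fun i _ => ?_)
    have hg : Tendsto (fun t : ℝ => (collocAC s c - ((t:ℂ)*Complex.I)⁻¹ • 1)⁻¹ i j) l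
        (nhds ((collocAC s c - (0:ℂ) • 1)⁻¹ i j)) := by
      have h := (contAt_g_entry s c hNZ i j).tendsto.comp hμ
      simpa [Function.comp_def] using h
    exact tendsto_const_nhds.mul hg
  refine Tendsto.congr' ?_ h2
  filter_upwards [hne] with t ht
  exact (q_eventual s c hNZ j t ht).symm

lemma IS_bound (hNZ : ∀ μ : ℂ, μ.re = 0 → (collocAC s c - μ • 1).det ≠ 0) :
    ∃ M : ℝ, ∀ lam : ℂ, lam.re = 0 → ∀ j,
    ‖lam * ((collocBC s c) ᵥ* (1 - lam • collocAC s c)⁻¹) j‖ ≤ M := by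
  set L : Fin s → ℂ := fun j => -∑ i, collocBC s c i * ((collocAC s c - (0:ℂ) • 1)⁻¹ i j)
    with hL
  set Ψ : ℝ → ℝ := fun t => ∑ j : Fin s, ‖
      ((t:ℂ)*Complex.I) * ((collocBC s c) ᵥ* (1 - ((t:ℂ)*Complex.I) • collocAC s c)⁻¹) j‖
    with hΨ
  have hcont : Continuous Ψ :=
    continuous_finset_sum _ fun j _ => continuous_norm.comp (cont_q s c hNZ j)
  have htop : Tendsto Ψ atTop (nhds (∑ j : Fin s, ‖L j‖)) := by
    refine tendsto_finset_sum _ fun j _ => ?_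
    exact (continuous_norm.tendsto _).comp
      (q_tendsto s c hNZ j tendsto_inv_atTop_zero (eventually_ne_atTop 0))
  have hbot : Tendsto Ψ atBot (nhds (∑ j : Fin s, ‖L j‖)) := by
    refine tendsto_finset_sum _ fun j _ => ?_
    exact (continuous_norm.tendsto _).comp
      (q_tendsto s c hNZ j inv_atBot (eventually_ne_atBot 0))
  obtain ⟨M, hM⟩ := bdd_of_tendsto Ψ hcont htop hbot
  refine ⟨M, fun lam h j => ?_⟩
  have hlam : lam = ((lam.im : ℝ):ℂ) * Complex.I := by
    apply Complex.ext <;> simp [h]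
  refine le_trans ?_ (hM lam.im)
  have hs := Finset.single_le_sum (f := fun j : Fin s => ‖
      (((lam.im:ℝ):ℂ)*Complex.I) *
        ((collocBC s c) ᵥ* (1 - (((lam.im:ℝ):ℂ)*Complex.I) • collocAC s c)⁻¹) j‖)
    (fun j _ => norm_nonneg _) (Finset.mem_univ j)
  rw [hlam]
  simpa [hΨ] using hs

end Aux6

end AuxProofs

/-- an `I`-stable collocation method such that `τ(π)` has no root on `iℝ`
is `Î`-stable (i.e. `I`-, `IS`- and `ISI`-stable). -/
theorem IStable_of_no_root_hatI (s : ℕ) (hs : 1 ≤ s) (c : Fin s → ℝ) (hc : StrictMono c)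
    (hI : IStable s c)
    (hroot : ∀ z : ℂ, z.re = 0 → Polynomial.aeval z (tauP (piPoly s c)) ≠ 0) :
    IStable s c ∧ ISStable s c ∧ ISIStable s c := by
  have hNZ : ∀ μ : ℂ, μ.re = 0 → (collocAC s c - μ • 1).det ≠ 0 := fun μ hμ =>
    Aux4.keydet s c hc hs μ (hroot μ hμ)
  have hInv : ∀ lam : ℂ, lam.re = 0 → IsUnit (1 - lam • collocAC s c).det := fun lam h =>
    isUnit_iff_ne_zero.mpr (Aux5.det_one_sub_ne s c hNZ lam h)
  refine ⟨hI, ⟨hInv, ?_⟩, ⟨hInv, ?_⟩⟩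
  · obtain ⟨M, hM⟩ := Aux6.IS_bound s c hNZ
    exact ⟨M, fun lam h j => hM lam h j⟩
  · obtain ⟨M, hM⟩ := Aux6.ISI_bound s c hNZ
    exact ⟨M, fun lam h i j => hM lam h i j⟩
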